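/- arXiv:2307.10489 — 4 statements merged into one kernel-verified Lean document; each statement's English description precedes it below -/
import Mathlib

section
/- Suppose W is three times continuously differentiable, U ⊆ ℝ^K is open, φ : U → ℝ^N is continuously differentiable, ∇_z W(φ(u), u) = 0 for all u ∈ U, and ∇²_zz W(φ(u₀), u₀) is invertible at u₀ ∈ U. Then the reduced potential W*(u) := W(φ(u), u) is twice differentiable at u₀ and its Hessian equals the control Hessian: ∇²W*(u₀) = G(φ(u₀), u₀) = ∇²_uu W − ∇²_zu W (∇²_zz W)⁻¹ ∇²_uz W, evaluated at (φ(u₀), u₀). -/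
open ContinuousLinearMap InnerProductSpace

section aux
variable {Z U F : Type*} [NormedAddCommGroup Z] [NormedSpace ℝ Z]
  [NormedAddCommGroup U] [NormedSpace ℝ U] [NormedAddCommGroup F] [NormedSpace ℝ F]

lemma aux_sliceL {f : Z × U → F} {p : Z × U} (hf : DifferentiableAt ℝ f p) :
    fderiv ℝ (fun z => f (z, p.2)) p.1 = (fderiv ℝ f p).comp (inl ℝ Z U) := by
  have h1 : HasFDerivAt (fun z : Z => (z, p.2)) (inl ℝ Z U) p.1 := by
    exact HasFDerivAt.prodMk (hasFDerivAt_id p.1) (hasFDerivAt_const p.2 p.1)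
  exact (hf.hasFDerivAt.comp p.1 h1).fderiv

lemma aux_sliceR {f : Z × U → F} {p : Z × U} (hf : DifferentiableAt ℝ f p) :
    fderiv ℝ (fun u => f (p.1, u)) p.2 = (fderiv ℝ f p).comp (inr ℝ Z U) := by
  have h1 : HasFDerivAt (fun u : U => (p.1, u)) (inr ℝ Z U) p.2 := by
    exact HasFDerivAt.prodMk (hasFDerivAt_const p.1 p.2) (hasFDerivAt_id p.2)
  exact (hf.hasFDerivAt.comp p.2 h1).fderiv

end aux

/-- The Hessian of the reduced potential is the control Hessian
(Schur complement). If `W` is C³, `φ` is a C¹ branch of equilibria on an open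
set `U`, and `∇²_zz W (φ u₀, u₀)` is invertible (given as the equivalence `H`),
then the reduced potential `W* u = W (φ u, u)` is twice differentiable at `u₀`
and `∇²W*(u₀) = ∇²_uu W - ∇²_zu W ∘ (∇²_zz W)⁻¹ ∘ ∇²_uz W` at `(φ u₀, u₀)`. -/
theorem reduced_potential_hessian (N K : ℕ)
    (W : EuclideanSpace ℝ (Fin N) × EuclideanSpace ℝ (Fin K) → ℝ)
    (hW : ContDiff ℝ 3 W)
    (U : Set (EuclideanSpace ℝ (Fin K))) (hU : IsOpen U)
    (u₀ : EuclideanSpace ℝ (Fin K)) (hu₀ : u₀ ∈ U)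
    (φ : EuclideanSpace ℝ (Fin K) → EuclideanSpace ℝ (Fin N))
    (hφ : ContDiffOn ℝ 1 φ U)
    (heq : ∀ u ∈ U, gradient (fun z => W (z, u)) (φ u) = 0)
    (H : EuclideanSpace ℝ (Fin N) ≃L[ℝ] EuclideanSpace ℝ (Fin N))
    (hH : (H : EuclideanSpace ℝ (Fin N) →L[ℝ] EuclideanSpace ℝ (Fin N))
      = fderiv ℝ (fun z => gradient (fun z' => W (z', u₀)) z) (φ u₀)) :
    DifferentiableAt ℝ (fun u => W (φ u, u)) u₀ ∧
    DifferentiableAt ℝ (fun u => gradient (fun u' => W (φ u', u')) u) u₀ ∧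
    fderiv ℝ (fun u => gradient (fun u' => W (φ u', u')) u) u₀ =
      fderiv ℝ (fun u => gradient (fun u' => W (φ u₀, u')) u) u₀ -
      (fderiv ℝ (fun z => gradient (fun u' => W (z, u')) u₀) (φ u₀)).comp
        ((H.symm : EuclideanSpace ℝ (Fin N) →L[ℝ] EuclideanSpace ℝ (Fin N)).comp
          (fderiv ℝ (fun u => gradient (fun z' => W (z', u)) (φ u₀)) u₀)) := by
  have hWd : Differentiable ℝ W := hW.differentiable (by norm_num)
  have hF : ContDiff ℝ 2 (fderiv ℝ W) := hW.fderiv_right (by norm_num)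
  set gz : (EuclideanSpace ℝ (Fin N)) × (EuclideanSpace ℝ (Fin K)) → (EuclideanSpace ℝ (Fin N)) :=
    fun p => (toDual ℝ (EuclideanSpace ℝ (Fin N))).symm ((fderiv ℝ W p).comp (inl ℝ (EuclideanSpace ℝ (Fin N)) (EuclideanSpace ℝ (Fin K)))) with hgzdef
  set gu : (EuclideanSpace ℝ (Fin N)) × (EuclideanSpace ℝ (Fin K)) → (EuclideanSpace ℝ (Fin K)) :=
    fun p => (toDual ℝ (EuclideanSpace ℝ (Fin K))).symm ((fderiv ℝ W p).comp (inr ℝ (EuclideanSpace ℝ (Fin N)) (EuclideanSpace ℝ (Fin K)))) with hgudef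
  have hgzC : ContDiff ℝ 2 gz :=
    ((toDual ℝ (EuclideanSpace ℝ (Fin N))).symm.contDiff).comp (hF.clm_comp contDiff_const)
  have hguC : ContDiff ℝ 2 gu :=
    ((toDual ℝ (EuclideanSpace ℝ (Fin K))).symm.contDiff).comp (hF.clm_comp contDiff_const)
  have hgzd : Differentiable ℝ gz := hgzC.differentiable (by norm_num)
  have hgud : Differentiable ℝ gu := hguC.differentiable (by norm_num)
  have hgz_eq : ∀ p : (EuclideanSpace ℝ (Fin N)) × (EuclideanSpace ℝ (Fin K)), gradient (fun z' => W (z', p.2)) p.1 = gz p := by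
    intro p
    show (toDual ℝ (EuclideanSpace ℝ (Fin N))).symm (fderiv ℝ (fun z' => W (z', p.2)) p.1) = _
    rw [aux_sliceL (hWd p)]
  have hgu_eq : ∀ p : (EuclideanSpace ℝ (Fin N)) × (EuclideanSpace ℝ (Fin K)), gradient (fun u' => W (p.1, u')) p.2 = gu p := by
    intro p
    show (toDual ℝ (EuclideanSpace ℝ (Fin K))).symm (fderiv ℝ (fun u' => W (p.1, u')) p.2) = _
    rw [aux_sliceR (hWd p)]
  set p₀ : (EuclideanSpace ℝ (Fin N)) × (EuclideanSpace ℝ (Fin K)) := (φ u₀, u₀) with hp₀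
  set Dz := fderiv ℝ gz p₀ with hDz
  set Du := fderiv ℝ gu p₀ with hDu
  set Dφ := fderiv ℝ φ u₀ with hDφ
  have hφd : ∀ u ∈ U, DifferentiableAt ℝ φ u := fun u hu =>
    ((hφ.differentiableOn one_ne_zero).differentiableAt (hU.mem_nhds hu))
  have hφd0 : DifferentiableAt ℝ φ u₀ := hφd u₀ hu₀
  -- the four slice second derivatives
  have hHDz : (H : (EuclideanSpace ℝ (Fin N)) →L[ℝ] (EuclideanSpace ℝ (Fin N))) = Dz.comp (inl ℝ (EuclideanSpace ℝ (Fin N)) (EuclideanSpace ℝ (Fin K))) := by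
    rw [hH]
    have h1 : (fun z => gradient (fun z' => W (z', u₀)) z) = fun z => gz (z, u₀) :=
      funext fun z => hgz_eq (z, u₀)
    rw [h1]
    exact aux_sliceL (hgzd p₀)
  have hA : fderiv ℝ (fun u => gradient (fun z' => W (z', u)) (φ u₀)) u₀
      = Dz.comp (inr ℝ (EuclideanSpace ℝ (Fin N)) (EuclideanSpace ℝ (Fin K))) := by
    have h1 : (fun u => gradient (fun z' => W (z', u)) (φ u₀)) = fun u => gz (φ u₀, u) :=
      funext fun u => hgz_eq (φ u₀, u)
    rw [h1]
    exact aux_sliceR (hgzd p₀)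
  have hB : fderiv ℝ (fun z => gradient (fun u' => W (z, u')) u₀) (φ u₀)
      = Du.comp (inl ℝ (EuclideanSpace ℝ (Fin N)) (EuclideanSpace ℝ (Fin K))) := by
    have h1 : (fun z => gradient (fun u' => W (z, u')) u₀) = fun z => gu (z, u₀) :=
      funext fun z => hgu_eq (z, u₀)
    rw [h1]
    exact aux_sliceL (hgud p₀)
  have hC : fderiv ℝ (fun u => gradient (fun u' => W (φ u₀, u')) u) u₀
      = Du.comp (inr ℝ (EuclideanSpace ℝ (Fin N)) (EuclideanSpace ℝ (Fin K))) := by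
    have h1 : (fun u => gradient (fun u' => W (φ u₀, u')) u) = fun u => gu (φ u₀, u) :=
      funext fun u => hgu_eq (φ u₀, u)
    rw [h1]
    exact aux_sliceR (hgud p₀)
  -- gz vanishes along the branch
  have hgz0 : ∀ u ∈ U, gz (φ u, u) = 0 := by
    intro u hu
    rw [← hgz_eq (φ u, u)]
    exact heq u hu
  -- the reduced gradient coincides with gu along the branch
  have hg_eq : ∀ u ∈ U, gradient (fun u' => W (φ u', u')) u = gu (φ u, u) := by
    intro u hu
    have hinner : HasFDerivAt (fun u' : (EuclideanSpace ℝ (Fin K)) => (φ u', u'))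
        ((fderiv ℝ φ u).prod (ContinuousLinearMap.id ℝ (EuclideanSpace ℝ (Fin K)))) u :=
      HasFDerivAt.prodMk (hφd u hu).hasFDerivAt (hasFDerivAt_id u)
    have hcomp : HasFDerivAt (fun u' => W (φ u', u'))
        ((fderiv ℝ W (φ u, u)).comp ((fderiv ℝ φ u).prod (ContinuousLinearMap.id ℝ (EuclideanSpace ℝ (Fin K))))) u :=
      HasFDerivAt.comp (g := W) (f := fun u' => (φ u', u')) u
        (hWd (φ u, u)).hasFDerivAt hinner
    have hz0 : (fderiv ℝ W (φ u, u)).comp (inl ℝ (EuclideanSpace ℝ (Fin N)) (EuclideanSpace ℝ (Fin K))) = 0 := by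
      have h := hgz0 u hu
      have h2 := congrArg (toDual ℝ (EuclideanSpace ℝ (Fin N))) h
      simpa [hgzdef] using h2
    show (toDual ℝ (EuclideanSpace ℝ (Fin K))).symm (fderiv ℝ (fun u' => W (φ u', u')) u) = _
    rw [hcomp.fderiv]
    congr 1
    ext δ
    have hsum : ((fderiv ℝ φ u) δ, δ) = ((fderiv ℝ φ u) δ, (0 : (EuclideanSpace ℝ (Fin K)))) + ((0 : (EuclideanSpace ℝ (Fin N))), δ) := by
      simp
    simp only [comp_apply, prod_apply, ContinuousLinearMap.id_apply, inr_apply]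
    rw [hsum, map_add]
    have : fderiv ℝ W (φ u, u) ((fderiv ℝ φ u) δ, (0 : (EuclideanSpace ℝ (Fin K)))) = 0 := by
      have := congrFun (congrArg (fun (L : (EuclideanSpace ℝ (Fin N)) →L[ℝ] ℝ) => (L : (EuclideanSpace ℝ (Fin N)) → ℝ)) hz0) ((fderiv ℝ φ u) δ)
      simpa using this
    rw [this, zero_add]
  -- differentiability of the composed maps
  have hprod : DifferentiableAt ℝ (fun u : (EuclideanSpace ℝ (Fin K)) => (φ u, u)) u₀ :=
    DifferentiableAt.prodMk hφd0 differentiableAt_id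
  have hinner0 : HasFDerivAt (fun u : EuclideanSpace ℝ (Fin K) => (φ u, u))
      (Dφ.prod (ContinuousLinearMap.id ℝ (EuclideanSpace ℝ (Fin K)))) u₀ :=
    HasFDerivAt.prodMk hφd0.hasFDerivAt (hasFDerivAt_id u₀)
  have hguφ : HasFDerivAt (fun u => gu (φ u, u)) (Du.comp (Dφ.prod (ContinuousLinearMap.id ℝ (EuclideanSpace ℝ (Fin K))))) u₀ :=
    HasFDerivAt.comp (g := gu) (f := fun u => (φ u, u)) u₀ (hgud p₀).hasFDerivAt hinner0
  have hgzφ : HasFDerivAt (fun u => gz (φ u, u)) (Dz.comp (Dφ.prod (ContinuousLinearMap.id ℝ (EuclideanSpace ℝ (Fin K))))) u₀ :=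
    HasFDerivAt.comp (g := gz) (f := fun u => (φ u, u)) u₀ (hgzd p₀).hasFDerivAt hinner0
  -- splitting lemma
  have hsplit : ∀ (E : Type) [NormedAddCommGroup E] [NormedSpace ℝ E]
      (L : (EuclideanSpace ℝ (Fin N)) × (EuclideanSpace ℝ (Fin K)) →L[ℝ] E),
      L.comp (Dφ.prod (ContinuousLinearMap.id ℝ (EuclideanSpace ℝ (Fin K))))
        = (L.comp (inl ℝ (EuclideanSpace ℝ (Fin N)) (EuclideanSpace ℝ (Fin K)))).comp Dφ + L.comp (inr ℝ (EuclideanSpace ℝ (Fin N)) (EuclideanSpace ℝ (Fin K))) := by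
    intro E _ _ L
    ext δ
    have hsum : (Dφ δ, δ) = (Dφ δ, (0 : (EuclideanSpace ℝ (Fin K)))) + ((0 : (EuclideanSpace ℝ (Fin N))), δ) := by simp
    simp only [comp_apply, prod_apply, ContinuousLinearMap.id_apply, add_apply, inl_apply,
      inr_apply]
    rw [hsum, map_add]
  -- implicit function relation
  have himpl : (Dz.comp (inl ℝ (EuclideanSpace ℝ (Fin N)) (EuclideanSpace ℝ (Fin K)))).comp Dφ + Dz.comp (inr ℝ (EuclideanSpace ℝ (Fin N)) (EuclideanSpace ℝ (Fin K))) = 0 := by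
    have hEq : (fun u => gz (φ u, u)) =ᶠ[nhds u₀] (fun _ => (0 : (EuclideanSpace ℝ (Fin N)))) :=
      Filter.eventuallyEq_of_mem (hU.mem_nhds hu₀) hgz0
    have h0 : fderiv ℝ (fun u => gz (φ u, u)) u₀ = 0 := by
      rw [hEq.fderiv_eq]
      exact fderiv_const_apply 0
    rw [← hsplit _ Dz, ← hgzφ.fderiv, h0]
  -- hence Dφ = -(H.symm ∘ A)
  have hDφ_eq : Dφ = -((H.symm : (EuclideanSpace ℝ (Fin N)) →L[ℝ] (EuclideanSpace ℝ (Fin N))).comp (Dz.comp (inr ℝ (EuclideanSpace ℝ (Fin N)) (EuclideanSpace ℝ (Fin K))))) := by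
    ext δ
    have h1 : Dz ((Dφ δ), 0) + Dz (0, δ) = 0 := by
      have := congrFun (congrArg DFunLike.coe himpl) δ
      simpa using this
    have h2 : H (Dφ δ) = Dz (Dφ δ, 0) := by
      have := congrFun (congrArg DFunLike.coe hHDz) (Dφ δ)
      simpa using this
    have h3 : Dφ δ = H.symm (Dz (Dφ δ, 0)) := by
      rw [← h2, H.symm_apply_apply]
    have h4 : Dz (Dφ δ, 0) = -(Dz (0, δ)) := eq_neg_of_add_eq_zero_left h1
    rw [h3, h4, map_neg]
    simp
  -- eventual equality of the reduced gradient
  have hEqg : (fun u => gradient (fun u' => W (φ u', u')) u) =ᶠ[nhds u₀]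
      (fun u => gu (φ u, u)) :=
    Filter.eventuallyEq_of_mem (hU.mem_nhds hu₀) hg_eq
  refine ⟨?_, ?_, ?_⟩
  · exact (HasFDerivAt.comp (g := W) (f := fun u => (φ u, u)) u₀
      (hWd p₀).hasFDerivAt hinner0).differentiableAt
  · exact hEqg.differentiableAt_iff.mpr hguφ.differentiableAt
  · rw [hEqg.fderiv_eq, hguφ.fderiv, hsplit _ Du, hB, hC, hA, hDφ_eq,
      ContinuousLinearMap.comp_neg, neg_add_eq_sub]
end

section
/- Let u ∈ ℝ² with u ≠ u_crit, so that L_u = ‖u − u_crit‖ > 0. Then α ∈ ℝ is an equilibrium of the pendulum potential, i.e. ∂W/∂α (α, u) = 0, if and only if u − u_crit = L_u·n_α or u − u_crit = −L_u·n_α (the control point is aligned or anti-aligned with the pendulum direction). -/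
open Real

/-- The pendulum potential
`W(α, u) = ½ m g L₀ sin α + ½ k_c ‖u - L₀ n_α‖²`, written in coordinates. -/
noncomputable def pendW (m g L₀ kc : ℝ) (α : ℝ) (u : ℝ × ℝ) : ℝ :=
  (1 / 2) * m * g * L₀ * sin α +
    (1 / 2) * kc * ((u.1 - L₀ * cos α) ^ 2 + (u.2 - L₀ * sin α) ^ 2)

/-- The pendulum direction `n_α = (cos α, sin α)`. -/
noncomputable def pendN (α : ℝ) : ℝ × ℝ := (cos α, sin α)

/-- The critical control point `u_crit = (0, m g / (2 k_c))`. -/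
noncomputable def pendUcrit (m g kc : ℝ) : ℝ × ℝ := (0, m * g / (2 * kc))

/-- The control length `L_u = ‖u - u_crit‖`. -/
noncomputable def pendLu (m g kc : ℝ) (u : ℝ × ℝ) : ℝ :=
  Real.sqrt (u.1 ^ 2 + (u.2 - m * g / (2 * kc)) ^ 2)

lemma pendW_hasDerivAt (m g L₀ kc : ℝ) (u : ℝ × ℝ) (α : ℝ) :
    HasDerivAt (fun β => pendW m g L₀ kc β u)
      ((1 / 2) * m * g * L₀ * cos α +
        (1 / 2) * kc * (2 * (u.1 - L₀ * cos α) * (L₀ * sin α) +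
          2 * (u.2 - L₀ * sin α) * (-(L₀ * cos α)))) α := by
  unfold pendW
  have h1 : HasDerivAt (fun β : ℝ => u.1 - L₀ * cos β) (L₀ * sin α) α := by
    simpa using ((Real.hasDerivAt_cos α).const_mul L₀).const_sub u.1
  have h2 : HasDerivAt (fun β : ℝ => u.2 - L₀ * sin β) (-(L₀ * cos α)) α := by
    simpa using ((Real.hasDerivAt_sin α).const_mul L₀).const_sub u.2
  have h1' := h1.pow 2
  have h2' := h2.pow 2
  have hs := (Real.hasDerivAt_sin α).const_mul ((1 / 2) * m * g * L₀)
  have := hs.add (((h1'.add h2').const_mul ((1 / 2) * kc)))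
  convert this using 1
  exacts [rfl, rfl, rfl, by push_cast; ring]

/-- For `u ≠ u_crit` (so that `L_u > 0`), `α` is an equilibrium
(`∂W/∂α (α, u) = 0`) iff `u - u_crit = L_u n_α` or `u - u_crit = -L_u n_α`. -/
theorem pendulum_equilibrium_iff_aligned (m g L₀ kc : ℝ)
    (hm : 0 < m) (hg : 0 < g) (hL : 0 < L₀) (hk : 0 < kc)
    (u : ℝ × ℝ) (hu : u ≠ pendUcrit m g kc) (α : ℝ) :
    0 < pendLu m g kc u ∧
    (deriv (fun β => pendW m g L₀ kc β u) α = 0 ↔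
      u - pendUcrit m g kc = pendLu m g kc u • pendN α ∨
      u - pendUcrit m g kc = -(pendLu m g kc u • pendN α)) := by
  have hk' : kc ≠ 0 := hk.ne'
  have hL' : L₀ ≠ 0 := hL.ne'
  have hkc : kc * (m * g / (2 * kc)) = m * g / 2 := by field_simp
  set v₁ := u.1 with hv1
  set v₂ := u.2 - m * g / (2 * kc) with hv2
  have hvne : v₁ ≠ 0 ∨ v₂ ≠ 0 := by
    by_contra hco
    push_neg at hco
    exact hu (Prod.ext hco.1 (by show u.2 = m * g / (2 * kc); have := hco.2; rw [hv2] at this; linarith))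
  have hsum : 0 < v₁ ^ 2 + v₂ ^ 2 := by
    rcases hvne with hno | hno
    · positivity
    · positivity
  have hLpos : 0 < pendLu m g kc u := Real.sqrt_pos.mpr hsum
  set L := pendLu m g kc u with hLdef
  have hLsq : L ^ 2 = v₁ ^ 2 + v₂ ^ 2 := Real.sq_sqrt hsum.le
  refine ⟨hLpos, ?_⟩
  rw [(pendW_hasDerivAt m g L₀ kc u α).deriv]
  have hcs := sin_sq_add_cos_sq α
  have hgoal : (u - pendUcrit m g kc = L • pendN α ↔ v₁ = L * cos α ∧ v₂ = L * sin α) ∧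
      (u - pendUcrit m g kc = -(L • pendN α) ↔ v₁ = -(L * cos α) ∧ v₂ = -(L * sin α)) := by
    constructor <;>
      · rw [Prod.ext_iff]
        simp only [pendUcrit, pendN, Prod.fst_sub, Prod.snd_sub, Prod.smul_fst, Prod.smul_snd,
          Prod.fst_neg, Prod.snd_neg, smul_eq_mul, sub_zero]
        exact Iff.rfl
  rw [hgoal.1, hgoal.2]
  constructor
  · intro h
    have key : v₁ * sin α - v₂ * cos α = 0 := by
      have hmul : kc * L₀ * (v₁ * sin α - v₂ * cos α) = 0 := by
        rw [hv1, hv2]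
        linear_combination h + (L₀ * cos α) * hkc
      rcases mul_eq_zero.mp hmul with h' | h'
      · exact absurd h' (by positivity)
      · exact h'
    set c := v₁ * cos α + v₂ * sin α with hc
    have e1 : v₁ = c * cos α := by linear_combination sin α * key - v₁ * hcs
    have e2 : v₂ = c * sin α := by linear_combination (-cos α) * key - v₂ * hcs
    have hc2 : c ^ 2 = L ^ 2 := by
      rw [hLsq]
      linear_combination (-(v₁ + c * cos α)) * e1 - (v₂ + c * sin α) * e2 - c ^ 2 * hcs
    have hfac : (c - L) * (c + L) = 0 := by linear_combination hc2
    rcases mul_eq_zero.mp hfac with h' | h'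
    · left
      have hcL : c = L := by linarith
      rw [← hcL]
      exact ⟨e1, e2⟩
    · right
      have hcL : c = -L := by linarith
      rw [hcL] at e1 e2
      exact ⟨by linarith, by linarith⟩
  · rintro (⟨e1, e2⟩ | ⟨e1, e2⟩) <;>
      · rw [hv1] at e1
        rw [hv2] at e2
        linear_combination (kc * L₀ * sin α) * e1 - (kc * L₀ * cos α) * e2 - (L₀ * cos α) * hkc
end

section
/- Let α ∈ ℝ, L > 0, and let u = (u_x, u_y) = u_crit + L·n_α (a stable, aligned equilibrium configuration). Then the total potential at this equilibrium equals W(α, u) = (1/2)·k_c·(L − L₀)² + (1/2)·m·g·u_y − (m·g)²/(8·k_c); i.e. the reduced potential is a quadratic function of the control length L plus a term linear in u_y plus a constant. -/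
open Real

/-- At a stable aligned equilibrium `u = u_crit + L n_α` with
`L > 0`, the reduced potential is
`W(α, u) = ½ k_c (L - L₀)² + ½ m g u_y - (m g)²/(8 k_c)`. -/
theorem pendulum_reduced_potential (m g L₀ kc : ℝ)
    (hm : 0 < m) (hg : 0 < g) (hL₀ : 0 < L₀) (hk : 0 < kc)
    (α : ℝ) (L : ℝ) (hL : 0 < L) (u : ℝ × ℝ)
    (hu : u = pendUcrit m g kc + L • pendN α) :
    pendW m g L₀ kc α u
      = (1 / 2) * kc * (L - L₀) ^ 2 + (1 / 2) * m * g * u.2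
        - (m * g) ^ 2 / (8 * kc) := by
  subst hu
  simp only [pendW, pendUcrit, pendN, Prod.fst_add, Prod.snd_add, Prod.smul_mk,
    smul_eq_mul, Prod.mk_add_mk]
  have hs := sin_sq_add_cos_sq α
  have hk' : kc ≠ 0 := ne_of_gt hk
  field_simp
  linear_combination 32 * kc^2 * (L - L₀)^2 * hs
end

section
/- Let α ∈ ℝ, L_u > 0, and u = u_crit + L_u·n_α (a stable equilibrium, so that ∂²W/∂α²(α, u) = k_c·L₀·L_u > 0). Then the control Hessian (Schur complement) G(α, u) := ∇²_uu W − ∇²_αu W · (∂²W/∂α²)⁻¹ · ∇²_uα W, evaluated at (α, u), equals the 2 × 2 matrix k_c·I₂ − k_c·(L₀/L_u)·n_α^⊥ (n_α^⊥)ᵀ; in particular G(α, u)·n_α = k_c·n_α and G(α, u)·n_α^⊥ = k_c·(1 − L₀/L_u)·n_α^⊥, so n_α and n_α^⊥ are eigenvectors with eigenvalues k_c and k_c·(1 − L₀/L_u) respectively. -/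
open Real Matrix

/-- The pendulum direction `n_α = (cos α, sin α)` (as a vector in `ℝ²`). -/
noncomputable def pendNvec (α : ℝ) : Fin 2 → ℝ := ![cos α, sin α]

/-- The perpendicular direction `n_α^⊥ = (-sin α, cos α)` (as a vector). -/
noncomputable def pendNperpVec (α : ℝ) : Fin 2 → ℝ := ![-sin α, cos α]

/-- The partial Hessian `∇²_uu W` of the pendulum potential, as a 2 × 2 matrix
of second partial derivatives in the control variables. -/
noncomputable def pendHuu (m g L₀ kc α : ℝ) (u : ℝ × ℝ) : Matrix (Fin 2) (Fin 2) ℝ :=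
  !![deriv (fun x => deriv (fun x' => pendW m g L₀ kc α (x', u.2)) x) u.1,
     deriv (fun y => deriv (fun x' => pendW m g L₀ kc α (x', y)) u.1) u.2;
     deriv (fun x => deriv (fun y' => pendW m g L₀ kc α (x, y')) u.2) u.1,
     deriv (fun y => deriv (fun y' => pendW m g L₀ kc α (u.1, y')) y) u.2]

/-- The mixed second derivative `∇²_uα W = ∇_u (∂W/∂α)` of the pendulum
potential, as a vector in `ℝ²`. -/
noncomputable def pendMixed (m g L₀ kc α : ℝ) (u : ℝ × ℝ) : Fin 2 → ℝ :=
  ![deriv (fun x => deriv (fun γ => pendW m g L₀ kc γ (x, u.2)) α) u.1,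
    deriv (fun y => deriv (fun γ => pendW m g L₀ kc γ (u.1, y)) α) u.2]

/-- The partial Hessian `∂²W/∂α²` of the pendulum potential. -/
noncomputable def pendWαα (m g L₀ kc α : ℝ) (u : ℝ × ℝ) : ℝ :=
  deriv (fun β => deriv (fun γ => pendW m g L₀ kc γ u) β) α

/-- The control Hessian (Schur complement)
`G(α, u) = ∇²_uu W - ∇²_αu W (∂²W/∂α²)⁻¹ ∇²_uα W` of the pendulum. -/
noncomputable def pendG (m g L₀ kc α : ℝ) (u : ℝ × ℝ) : Matrix (Fin 2) (Fin 2) ℝ :=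
  pendHuu m g L₀ kc α u -
    (pendWαα m g L₀ kc α u)⁻¹ •
      vecMulVec (pendMixed m g L₀ kc α u) (pendMixed m g L₀ kc α u)


lemma pendW_dx (m g L₀ kc α y x : ℝ) :
    deriv (fun x' => pendW m g L₀ kc α (x', y)) x = kc * (x - L₀ * cos α) := by
  have h : HasDerivAt (fun x' => pendW m g L₀ kc α (x', y))
      ((1/2) * kc * ((2:ℕ) * (x - L₀ * cos α) ^ (2-1) * 1)) x :=
    ((((hasDerivAt_id x).sub_const (L₀ * cos α)).pow 2).add_const
      ((y - L₀ * sin α) ^ 2) |>.const_mul ((1/2) * kc)).const_add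
      ((1/2) * m * g * L₀ * sin α)
  rw [h.deriv]; push_cast; ring

lemma pendW_dy (m g L₀ kc α x y : ℝ) :
    deriv (fun y' => pendW m g L₀ kc α (x, y')) y = kc * (y - L₀ * sin α) := by
  have h : HasDerivAt (fun y' => pendW m g L₀ kc α (x, y'))
      ((1/2) * kc * ((2:ℕ) * (y - L₀ * sin α) ^ (2-1) * 1)) y :=
    ((((hasDerivAt_id y).sub_const (L₀ * sin α)).pow 2).const_add
      ((x - L₀ * cos α) ^ 2) |>.const_mul ((1/2) * kc)).const_add
      ((1/2) * m * g * L₀ * sin α)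
  rw [h.deriv]; push_cast; ring

lemma pendW_dα (m g L₀ kc x y : ℝ) :
    deriv (fun γ => pendW m g L₀ kc γ (x, y))
      = fun γ => (1/2) * m * g * L₀ * cos γ + kc * L₀ * (x * sin γ - y * cos γ) := by
  funext γ
  have h : HasDerivAt (fun γ => pendW m g L₀ kc γ (x, y))
      ((1/2) * m * g * L₀ * cos γ +
        (1/2) * kc * ((2:ℕ) * (x - L₀ * cos γ) ^ (2-1) * -(L₀ * -sin γ)
          + (2:ℕ) * (y - L₀ * sin γ) ^ (2-1) * -(L₀ * cos γ))) γ :=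
    ((Real.hasDerivAt_sin γ).const_mul ((1/2) * m * g * L₀)).add
      (((((Real.hasDerivAt_cos γ).const_mul L₀).const_sub x).pow 2).add
        ((((Real.hasDerivAt_sin γ).const_mul L₀).const_sub y).pow 2)
        |>.const_mul ((1/2) * kc))
  rw [h.deriv]; push_cast; ring

lemma pendW_dxx (m g L₀ kc α y x0 : ℝ) :
    deriv (fun x => deriv (fun x' => pendW m g L₀ kc α (x', y)) x) x0 = kc := by
  simp only [pendW_dx]
  have h : HasDerivAt (fun x => kc * (x - L₀ * cos α)) (kc * 1) x0 :=
    ((hasDerivAt_id x0).sub_const (L₀ * cos α)).const_mul kc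
  rw [h.deriv]; ring

lemma pendW_dyx (m g L₀ kc α x0 y0 : ℝ) :
    deriv (fun y => deriv (fun x' => pendW m g L₀ kc α (x', y)) x0) y0 = 0 := by
  simp only [pendW_dx]
  exact deriv_const y0 _

lemma pendW_dxy (m g L₀ kc α x0 y0 : ℝ) :
    deriv (fun x => deriv (fun y' => pendW m g L₀ kc α (x, y')) y0) x0 = 0 := by
  simp only [pendW_dy]
  exact deriv_const x0 _

lemma pendW_dyy (m g L₀ kc α x0 y0 : ℝ) :
    deriv (fun y => deriv (fun y' => pendW m g L₀ kc α (x0, y')) y) y0 = kc := by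
  simp only [pendW_dy]
  have h : HasDerivAt (fun y => kc * (y - L₀ * sin α)) (kc * 1) y0 :=
    ((hasDerivAt_id y0).sub_const (L₀ * sin α)).const_mul kc
  rw [h.deriv]; ring

lemma pendW_dαx (m g L₀ kc α y0 x0 : ℝ) :
    deriv (fun x => deriv (fun γ => pendW m g L₀ kc γ (x, y0)) α) x0
      = kc * L₀ * sin α := by
  simp only [pendW_dα]
  have h : HasDerivAt
      (fun x => (1/2) * m * g * L₀ * cos α + kc * L₀ * (x * sin α - y0 * cos α))
      (kc * L₀ * (1 * sin α)) x0 :=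
    ((((hasDerivAt_id x0).mul_const (sin α)).sub_const (y0 * cos α)).const_mul
      (kc * L₀)).const_add ((1/2) * m * g * L₀ * cos α)
  rw [h.deriv]; ring

lemma pendW_dαy (m g L₀ kc α x0 y0 : ℝ) :
    deriv (fun y => deriv (fun γ => pendW m g L₀ kc γ (x0, y)) α) y0
      = -(kc * L₀ * cos α) := by
  simp only [pendW_dα]
  have h : HasDerivAt
      (fun y => (1/2) * m * g * L₀ * cos α + kc * L₀ * (x0 * sin α - y * cos α))
      (kc * L₀ * (0 - 1 * cos α)) y0 :=
    (((hasDerivAt_const y0 (x0 * sin α)).sub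
      ((hasDerivAt_id y0).mul_const (cos α))).const_mul (kc * L₀)).const_add
      ((1/2) * m * g * L₀ * cos α)
  rw [h.deriv]; ring

lemma pendW_dαα (m g L₀ kc α x0 y0 : ℝ) :
    deriv (fun β => deriv (fun γ => pendW m g L₀ kc γ (x0, y0)) β) α
      = -((1/2) * m * g * L₀ * sin α) + kc * L₀ * (x0 * cos α + y0 * sin α) := by
  simp only [pendW_dα]
  have h : HasDerivAt
      (fun β => (1/2) * m * g * L₀ * cos β + kc * L₀ * (x0 * sin β - y0 * cos β))
      ((1/2) * m * g * L₀ * -sin α + kc * L₀ * (x0 * cos α - y0 * -sin α)) α :=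
    ((Real.hasDerivAt_cos α).const_mul ((1/2) * m * g * L₀)).add
      ((((Real.hasDerivAt_sin α).const_mul x0).sub
        ((Real.hasDerivAt_cos α).const_mul y0)).const_mul (kc * L₀))
  rw [h.deriv]; ring

/-- At a stable aligned equilibrium `u = u_crit + L_u n_α`
(`L_u > 0`), the control Hessian equals
`k_c I₂ - k_c (L₀/L_u) n_α^⊥ (n_α^⊥)ᵀ`; in particular `n_α` and `n_α^⊥` are
eigenvectors with eigenvalues `k_c` and `k_c (1 - L₀/L_u)`. -/
theorem pendulum_control_hessian (m g L₀ kc : ℝ)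
    (hm : 0 < m) (hg : 0 < g) (hL₀ : 0 < L₀) (hk : 0 < kc)
    (α : ℝ) (Lu : ℝ) (hLu : 0 < Lu) (u : ℝ × ℝ)
    (hu : u = pendUcrit m g kc + Lu • (cos α, sin α)) :
    pendG m g L₀ kc α u
      = kc • (1 : Matrix (Fin 2) (Fin 2) ℝ)
        - (kc * (L₀ / Lu)) • vecMulVec (pendNperpVec α) (pendNperpVec α) ∧
    (pendG m g L₀ kc α u).mulVec (pendNvec α) = kc • pendNvec α ∧
    (pendG m g L₀ kc α u).mulVec (pendNperpVec α)
      = (kc * (1 - L₀ / Lu)) • pendNperpVec α := by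
  obtain ⟨ux, uy⟩ := u
  simp only [pendUcrit, Prod.mk_add_mk, Prod.smul_mk, smul_eq_mul, Prod.mk.injEq] at hu
  obtain ⟨hx, hy⟩ := hu
  have hk' : kc ≠ 0 := ne_of_gt hk
  have hLu' : Lu ≠ 0 := ne_of_gt hLu
  have hL₀' : L₀ ≠ 0 := ne_of_gt hL₀
  have hWαα : pendWαα m g L₀ kc α (ux, uy) = kc * L₀ * Lu := by
    unfold pendWαα
    rw [pendW_dαα, hx, hy]
    field_simp
    linear_combination (2 * kc * Lu) * sin_sq_add_cos_sq α
  have hG : pendG m g L₀ kc α (ux, uy)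
      = kc • (1 : Matrix (Fin 2) (Fin 2) ℝ)
        - (kc * (L₀ / Lu)) • vecMulVec (pendNperpVec α) (pendNperpVec α) := by
    unfold pendG pendHuu pendMixed
    rw [hWαα]
    ext i j
    fin_cases i <;> fin_cases j <;>
      simp [pendW_dxx, pendW_dyx, pendW_dxy, pendW_dyy, pendW_dαx, pendW_dαy,
        vecMulVec_apply, pendNperpVec, Matrix.one_apply] <;>
      field_simp <;> ring
  refine ⟨hG, ?_, ?_⟩
  · rw [hG]
    ext i
    fin_cases i <;>
      simp [Matrix.mulVec, dotProduct, vecMulVec_apply, pendNvec, pendNperpVec,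
        Matrix.one_apply, Fin.sum_univ_two, Matrix.sub_apply, Matrix.smul_apply] <;>
      ring
  · rw [hG]
    have hpy : sin α ^ 2 + cos α ^ 2 = 1 := sin_sq_add_cos_sq α
    ext i
    fin_cases i
    · simp [Matrix.mulVec, dotProduct, vecMulVec_apply, pendNvec, pendNperpVec,
        Matrix.one_apply, Fin.sum_univ_two, Matrix.sub_apply, Matrix.smul_apply]
      field_simp
      linear_combination (sin α * L₀) * hpy
    · simp [Matrix.mulVec, dotProduct, vecMulVec_apply, pendNvec, pendNperpVec,
        Matrix.one_apply, Fin.sum_univ_two, Matrix.sub_apply, Matrix.smul_apply]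
      field_simp
      linear_combination (-(cos α * L₀)) * hpy
end
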